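/- Let G be a group and σ : G → G an involutive anti-automorphism. Let δ > 0 and f, g : G → ℂ satisfy |f(x*y) + f(x*σ(y)) − 2·f(x)·g(y)| ≤ δ for all x, y ∈ G. If f is unbounded, then g satisfies g(x*y) + g(y*x) + g(σ(y)*x) + g(x*σ(y)) = 4·g(x)·g(y) for all x, y ∈ G. -/

import Mathlib

private lemma abs_add4 (a b c d : ℂ) :
    ‖a + b + c + d‖ ≤
      ‖a‖ + ‖b‖ + ‖c‖ + ‖d‖ := by
  calc ‖a + b + c + d‖ ≤ ‖a + b + c‖ + ‖d‖ :=
        norm_add_le _ _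
    _ ≤ ‖a + b‖ + ‖c‖ + ‖d‖ := by
        gcongr; exact norm_add_le _ _
    _ ≤ ‖a‖ + ‖b‖ + ‖c‖ + ‖d‖ := by
        gcongr; exact norm_add_le _ _

private lemma master (δ : ℝ) (c d A1 A2 A3 A4 A5 A6 A7 A8 A9 A10 w : ℂ)
    (hw : w = -(A1 + A2 + A3 + A4) + (A5 + A6 + A7 + A8) + 2 * d * A9 + 2 * c * A10)
    (h1 : ‖A1‖ ≤ δ) (h2 : ‖A2‖ ≤ δ) (h3 : ‖A3‖ ≤ δ)
    (h4 : ‖A4‖ ≤ δ) (h5 : ‖A5‖ ≤ δ) (h6 : ‖A6‖ ≤ δ)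
    (h7 : ‖A7‖ ≤ δ) (h8 : ‖A8‖ ≤ δ) (h9 : ‖A9‖ ≤ δ)
    (h10 : ‖A10‖ ≤ δ) :
    ‖w‖ ≤ 8 * δ + 2 * ‖d‖ * δ + 2 * ‖c‖ * δ := by
  subst hw
  have step : ‖-(A1 + A2 + A3 + A4) + (A5 + A6 + A7 + A8)
        + 2 * d * A9 + 2 * c * A10‖ ≤
      ‖-(A1 + A2 + A3 + A4)‖ + ‖A5 + A6 + A7 + A8‖
        + ‖2 * d * A9‖ + ‖2 * c * A10‖ := abs_add4 _ _ _ _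
  have n1 : ‖-(A1 + A2 + A3 + A4)‖ ≤ 4 * δ := by
    rw [norm_neg]
    have := abs_add4 A1 A2 A3 A4
    linarith
  have n2 : ‖A5 + A6 + A7 + A8‖ ≤ 4 * δ := by
    have := abs_add4 A5 A6 A7 A8
    linarith
  have n3 : ‖2 * d * A9‖ ≤ 2 * ‖d‖ * δ := by
    rw [norm_mul, norm_mul, Complex.norm_two]
    have hd := norm_nonneg d
    nlinarith
  have n4 : ‖2 * c * A10‖ ≤ 2 * ‖c‖ * δ := by
    rw [norm_mul, norm_mul, Complex.norm_two]
    have hc := norm_nonneg c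
    nlinarith
  linarith

theorem stmt_4 (G : Type*) [Group G] (σ : G → G)
    (hanti : ∀ x y : G, σ (x * y) = σ y * σ x) (hinv : ∀ x : G, σ (σ x) = x)
    (δ : ℝ) (hδ : 0 < δ) (f g : G → ℂ)
    (h : ∀ x y : G, ‖f (x * y) + f (x * σ y) - 2 * f x * g y‖ ≤ δ)
    (hf : ∀ M : ℝ, ∃ z : G, M < ‖f z‖) :
    ∀ x y : G, g (x * y) + g (y * x) + g (σ y * x) + g (x * σ y) = 4 * g x * g y := by
  intro x y
  set T : ℂ := g (x * y) + g (y * x) + g (σ y * x) + g (x * σ y) - 4 * g x * g y with hT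
  have key : ∀ z : G, 2 * ‖f z‖ * ‖T‖ ≤
      8 * δ + 2 * ‖g y‖ * δ + 2 * ‖g x‖ * δ := by
    intro z
    have e1 := h z (x * y)
    have e2 := h z (y * x)
    have e3 := h z (σ y * x)
    have e4 := h z (x * σ y)
    have e5 := h (z * x) y
    have e6 := h (z * σ x) y
    have e7 := h (z * y) x
    have e8 := h (z * σ y) x
    have e9 := h z x
    have e10 := h z y
    rw [hanti] at e1 e2 e3 e4
    rw [hinv] at e3 e4
    simp only [mul_assoc] at e1 e2 e3 e4 e5 e6 e7 e8
    have hiden : (2 : ℂ) * f z * T =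
        -((f (z * (x * y)) + f (z * (σ y * σ x)) - 2 * (f z * g (x * y)))
          + (f (z * (y * x)) + f (z * (σ x * σ y)) - 2 * (f z * g (y * x)))
          + (f (z * (σ y * x)) + f (z * (σ x * y)) - 2 * (f z * g (σ y * x)))
          + (f (z * (x * σ y)) + f (z * (y * σ x)) - 2 * (f z * g (x * σ y))))
        + ((f (z * (x * y)) + f (z * (x * σ y)) - 2 * (f (z * x) * g y))
          + (f (z * (σ x * y)) + f (z * (σ x * σ y)) - 2 * (f (z * σ x) * g y))
          + (f (z * (y * x)) + f (z * (y * σ x)) - 2 * (f (z * y) * g x))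
          + (f (z * (σ y * x)) + f (z * (σ y * σ x)) - 2 * (f (z * σ y) * g x)))
        + 2 * g y * (f (z * x) + f (z * σ x) - 2 * f z * g x)
        + 2 * g x * (f (z * y) + f (z * σ y) - 2 * f z * g y) := by
      rw [hT]; ring
    have habs := master δ (g x) (g y) _ _ _ _ _ _ _ _ _ _ _ hiden
      e1 e2 e3 e4 e5 e6 e7 e8 e9 e10
    rw [show (2 : ℂ) * f z * T = 2 * (f z * T) by ring, norm_mul,
      norm_mul, Complex.norm_two] at habs
    linarith
  by_contra hne
  have hT0 : T ≠ 0 := by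
    intro h0
    apply hne
    rw [hT] at h0
    linear_combination h0
  have hTpos : 0 < ‖T‖ := norm_pos_iff.mpr hT0
  obtain ⟨z, hz⟩ := hf ((8 * δ + 2 * ‖g y‖ * δ + 2 * ‖g x‖ * δ) /
      (2 * ‖T‖))
  rw [div_lt_iff₀ (by positivity)] at hz
  have hk := key z
  nlinarith [hk, hz]
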